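/- Let k be even, h an integer, u a nonnegative integer, and set h* = h-1 if h ≥ 1, h* = -h if h ≤ 0. If h* < k/2 then A^k_h(u) ≠ 0 if and only if 0 ≤ u ≤ k/2 - 1 - h*; if h* ≥ k/2 then A^k_h(u) ≠ 0 if and only if 0 ≤ u ≤ k/2 + h*. -/
import Mathlib


/-- Generalized binomial coefficient `C(z,n)` for integer `z`. -/
noncomputable def gbinom (z n : ℤ) : ℚ :=
  if 0 ≤ n then (∏ i ∈ Finset.range n.toNat, ((z : ℚ) - (i : ℚ))) / (Nat.factorial n.toNat : ℚ)
  else 0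

/-- The coefficient `𝒜^k_h(u)` from the Fourier expansion of `E^*_k(z,h)`. -/
noncomputable def Acoef (k h : ℤ) (u : ℕ) : ℚ :=
  if 0 ≤ k then
    (-1 : ℚ) ^ ((u : ℤ) + k / 2) * (Nat.factorial u : ℚ) *
      gbinom (k / 2 + h - 1) u * gbinom (k / 2 - h) u
  else
    (-1 : ℚ) ^ (u : ℤ) * ((Nat.factorial ((u : ℤ) - k / 2).toNat : ℚ)) ^ 2 /
      (Nat.factorial u : ℚ) * gbinom (h - 1) ((u : ℤ) - k / 2) * gbinom (-h) ((u : ℤ) - k / 2)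

lemma gbinom_ne_zero_iff (z n : ℤ) (hn : 0 ≤ n) :
    gbinom z n ≠ 0 ↔ z < 0 ∨ n ≤ z := by
  unfold gbinom
  rw [if_pos hn, div_ne_zero_iff]
  have hf : (Nat.factorial n.toNat : ℚ) ≠ 0 := Nat.cast_ne_zero.2 (Nat.factorial_ne_zero _)
  simp only [ne_eq, hf, not_false_eq_true, and_true]
  rw [← ne_eq, Finset.prod_ne_zero_iff]
  constructor
  · intro hall
    by_contra hc
    push_neg at hc
    obtain ⟨hz0, hzn⟩ := hc
    have hmem : z.toNat ∈ Finset.range n.toNat := Finset.mem_range.2 (by omega)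
    have := hall _ hmem
    apply this
    have : ((z.toNat : ℤ) : ℚ) = (z : ℚ) := by rw [Int.toNat_of_nonneg hz0]
    push_cast at this ⊢
    rw [this]; ring
  · intro hd i hi hzero
    have hzi : (z : ℚ) = (i : ℚ) := by linarith [sub_eq_zero.mp hzero]
    have : z = (i : ℤ) := by exact_mod_cast hzi
    have hi' : (i : ℤ) < n := by
      have := Finset.mem_range.1 hi
      omega
    omega

theorem Acoef_ne_zero_iff (k h : ℤ) (u : ℕ) (hk : 2 ∣ k) :
    ((if 1 ≤ h then h - 1 else -h) < k / 2 →
      (Acoef k h u ≠ 0 ↔ (u : ℤ) ≤ k / 2 - 1 - (if 1 ≤ h then h - 1 else -h))) ∧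
    (k / 2 ≤ (if 1 ≤ h then h - 1 else -h) →
      (Acoef k h u ≠ 0 ↔ (u : ℤ) ≤ k / 2 + (if 1 ≤ h then h - 1 else -h))) := by
  obtain ⟨m, rfl⟩ := hk
  have hm : (2 * m) / 2 = m := by omega
  rw [hm]
  unfold Acoef
  rw [hm]
  by_cases hk0 : (0 : ℤ) ≤ 2 * m
  · rw [if_pos hk0]
    have hu : (0 : ℤ) ≤ (u : ℤ) := Int.natCast_nonneg u
    have hz : (-1 : ℚ) ^ ((u : ℤ) + m) ≠ 0 := zpow_ne_zero _ (by norm_num)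
    have hf : (Nat.factorial u : ℚ) ≠ 0 := Nat.cast_ne_zero.2 (Nat.factorial_ne_zero u)
    rw [mul_ne_zero_iff, mul_ne_zero_iff, mul_ne_zero_iff]
    simp only [ne_eq, hz, hf, not_false_eq_true, true_and]
    simp only [← ne_eq, gbinom_ne_zero_iff _ _ hu]
    split_ifs <;> omega
  · rw [if_neg hk0]
    have hm0 : m < 0 := by omega
    have hu : (0 : ℤ) ≤ (u : ℤ) - m := by omega
    have hz : (-1 : ℚ) ^ ((u : ℤ)) ≠ 0 := zpow_ne_zero _ (by norm_num)
    have hf : (Nat.factorial u : ℚ) ≠ 0 := Nat.cast_ne_zero.2 (Nat.factorial_ne_zero u)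
    have hf2 : ((Nat.factorial ((u : ℤ) - m).toNat : ℚ)) ^ 2 ≠ 0 :=
      pow_ne_zero _ (Nat.cast_ne_zero.2 (Nat.factorial_ne_zero _))
    rw [mul_ne_zero_iff, mul_ne_zero_iff, div_ne_zero_iff, mul_ne_zero_iff]
    simp only [ne_eq, hz, hf, hf2, not_false_eq_true, true_and, and_true]
    simp only [← ne_eq, gbinom_ne_zero_iff _ _ hu]
    split_ifs <;> omega
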